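/- (Diversity order.) Let α > 0, β > 0 and γ_th > 0 be reals, and define P_out(s) = Υ(α, γ_th/(β s))/Γ(α) for s > 0. Then -log(P_out(s)) / log(s) → α as s → +∞; that is, the diversity order of the approximate MGC-FAS outage probability equals the shape parameter α. -/
import Mathlib


open Real Filter Topology MeasureTheory

/-- The lower incomplete gamma function `Υ(a, x) = ∫₀ˣ t^(a-1) e^(-t) dt`. -/
noncomputable def lowerIncGamma (a x : ℝ) : ℝ :=
  ∫ t in (0:ℝ)..x, t ^ (a - 1) * Real.exp (-t)

lemma lig_pow_integrable {α : ℝ} (hα : 0 < α) (x : ℝ) :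
    IntervalIntegrable (fun t : ℝ => t ^ (α - 1)) volume 0 x :=
  intervalIntegral.intervalIntegrable_rpow' (by linarith)

lemma lig_integrable {α : ℝ} (hα : 0 < α) {x : ℝ} (hx : 0 < x) :
    IntervalIntegrable (fun t : ℝ => t ^ (α - 1) * Real.exp (-t)) volume 0 x := by
  refine (lig_pow_integrable hα x).mono_fun ?_ ?_
  · exact (Measurable.aestronglyMeasurable
      ((measurable_id'.pow_const _).mul (Real.measurable_exp.comp measurable_neg)))
  · filter_upwards [ae_restrict_mem measurableSet_uIoc] with t ht
    rw [Set.uIoc_of_le hx.le] at ht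
    have ht0 : 0 ≤ t := ht.1.le
    have hpow : (0:ℝ) ≤ t ^ (α - 1) := Real.rpow_nonneg ht0 _
    simp only [Real.norm_eq_abs, abs_mul, abs_of_nonneg hpow,
      abs_of_pos (Real.exp_pos (-t))]
    nlinarith [Real.exp_le_one_iff.2 (neg_nonpos.2 ht0), Real.exp_pos (-t)]

lemma lig_pow_integral {α : ℝ} (hα : 0 < α) {x : ℝ} (hx : 0 < x) :
    ∫ t in (0:ℝ)..x, t ^ (α - 1) = x ^ α / α := by
  rw [integral_rpow (Or.inl (by linarith))]
  rw [sub_add_cancel, Real.zero_rpow hα.ne', sub_zero]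

lemma lig_upper {α : ℝ} (hα : 0 < α) {x : ℝ} (hx : 0 < x) :
    lowerIncGamma α x ≤ x ^ α / α := by
  rw [← lig_pow_integral hα hx]
  refine intervalIntegral.integral_mono_on hx.le (lig_integrable hα hx)
    (lig_pow_integrable hα x) ?_
  intro t ht
  have ht0 : 0 ≤ t := ht.1
  have hpow : (0:ℝ) ≤ t ^ (α - 1) := Real.rpow_nonneg ht0 _
  nlinarith [Real.exp_le_one_iff.2 (neg_nonpos.2 ht0), Real.exp_pos (-t)]

lemma lig_lower {α : ℝ} (hα : 0 < α) {x : ℝ} (hx : 0 < x) :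
    Real.exp (-x) * (x ^ α / α) ≤ lowerIncGamma α x := by
  have h1 : ∫ t in (0:ℝ)..x, Real.exp (-x) * t ^ (α - 1)
      = Real.exp (-x) * (x ^ α / α) := by
    rw [intervalIntegral.integral_const_mul, lig_pow_integral hα hx]
  rw [← h1]
  refine intervalIntegral.integral_mono_on hx.le
    ((lig_pow_integrable hα x).const_mul _) (lig_integrable hα hx) ?_
  intro t ht
  have ht0 : 0 ≤ t := ht.1
  have hpow : (0:ℝ) ≤ t ^ (α - 1) := Real.rpow_nonneg ht0 _
  have hexp : Real.exp (-x) ≤ Real.exp (-t) := Real.exp_le_exp.2 (by linarith [ht.2])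
  nlinarith

lemma lig_pos {α : ℝ} (hα : 0 < α) {x : ℝ} (hx : 0 < x) :
    0 < lowerIncGamma α x :=
  lt_of_lt_of_le (by positivity) (lig_lower hα hx)

/-- Diversity order: for `P_out(s) = Υ(α, γ_th/(β s))/Γ(α)`, the diversity order
`-log(P_out(s))/log(s)` tends to the shape parameter `α` as `s → ∞`. -/
theorem diversity_order (α β γth : ℝ) (hα : 0 < α) (hβ : 0 < β) (hγ : 0 < γth)
    (Pout : ℝ → ℝ) (hPout : ∀ s > (0:ℝ), Pout s = lowerIncGamma α (γth / (β * s)) / Real.Gamma α) :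
    Tendsto (fun s : ℝ => -Real.log (Pout s) / Real.log s) atTop (𝓝 α) := by
  have hΓ : 0 < Real.Gamma α := Real.Gamma_pos_of_pos hα
  set C : ℝ := Real.log (Real.Gamma α) + Real.log α + α * (Real.log β - Real.log γth) with hC
  have hinv : Tendsto (fun s : ℝ => (Real.log s)⁻¹) atTop (𝓝 0) :=
    tendsto_inv_atTop_zero.comp Real.tendsto_log_atTop
  have hxs : Tendsto (fun s : ℝ => γth / (β * s)) atTop (𝓝 0) := by
    have : Tendsto (fun s : ℝ => (γth / β) * s⁻¹) atTop (𝓝 ((γth / β) * 0)) :=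
      tendsto_inv_atTop_zero.const_mul _
    simpa [div_eq_mul_inv, mul_inv, mul_assoc, mul_comm, mul_left_comm] using this
  have hlo : Tendsto (fun s : ℝ => α + C * (Real.log s)⁻¹) atTop (𝓝 α) := by
    have := (hinv.const_mul C)
    simpa using tendsto_const_nhds.add this
  have hhi : Tendsto (fun s : ℝ => α + C * (Real.log s)⁻¹ + γth / (β * s) * (Real.log s)⁻¹)
      atTop (𝓝 α) := by
    have h2 := hxs.mul hinv
    simpa using hlo.add h2
  refine tendsto_of_tendsto_of_tendsto_of_le_of_le' hlo hhi ?_ ?_ <;>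
  · filter_upwards [eventually_gt_atTop 1] with s hs
    have hs0 : (0:ℝ) < s := by linarith
    have hls : 0 < Real.log s := Real.log_pos hs
    set x : ℝ := γth / (β * s) with hxdef
    have hx : 0 < x := by positivity
    have hU := lig_upper hα hx
    have hL := lig_lower hα hx
    have hpos := lig_pos hα hx
    have hlogx : Real.log x = Real.log γth - (Real.log β + Real.log s) := by
      rw [hxdef, Real.log_div hγ.ne' (by positivity), Real.log_mul hβ.ne' hs0.ne']
    have hU' : Real.log (lowerIncGamma α x) ≤ α * Real.log x - Real.log α := by
      have := Real.log_le_log hpos hU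
      rwa [Real.log_div (by positivity) hα.ne', Real.log_rpow hx] at this
    have hL' : α * Real.log x - Real.log α - x ≤ Real.log (lowerIncGamma α x) := by
      have := Real.log_le_log (by positivity) hL
      rw [Real.log_mul (Real.exp_ne_zero _) (by positivity), Real.log_exp,
        Real.log_div (by positivity) hα.ne', Real.log_rpow hx] at this
      linarith
    have hPrw : -Real.log (Pout s)
        = Real.log (Real.Gamma α) - Real.log (lowerIncGamma α x) := by
      rw [hPout s hs0, ← hxdef, Real.log_div hpos.ne' hΓ.ne']
      ring
    rw [hPrw]
    · -- the two goals: lower and upper bound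
      first
      | · rw [le_div_iff₀ hls]
          have : (α + C * (Real.log s)⁻¹) * Real.log s = α * Real.log s + C := by
            field_simp
          rw [this, hC, hlogx] at *
          nlinarith
      | · rw [div_le_iff₀ hls]
          have : (α + C * (Real.log s)⁻¹ + x * (Real.log s)⁻¹) * Real.log s
              = α * Real.log s + C + x := by
            field_simp
          rw [this, hC, hlogx] at *
          nlinarith
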